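/- arXiv:2108.01484 — 2 statements merged into one kernel-verified Lean document; each statement's English description precedes it below -/
import Mathlib

section
/- Let m, n be integers with 2 ≤ n ≤ 3 and 0 ≤ m < n. There exist absolute constants C > 0 and H₀ such that the following holds. Let P, Q be integer polynomials with no common non-constant factor, where P has degree exactly n and satisfies P(0) = 0, Q is nonzero of degree m, and max{H(P), H(Q)} ≤ H for some H ≥ H₀. Let c_n be the leading coefficient of P and d₀ = Q(0) (which is nonzero). Then the number of prime numbers ℓ > 0 for which ℓ·P + Q is reducible is at most C·τ(c_n)·τ(d₀)·log H / log log H, and the same bound holds for the number of prime numbers ℓ > 0 for which P + ℓ·Q is reducible. -/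
open Polynomial Filter

/-- Naive height of an integer polynomial: the maximum absolute value of its coefficients. -/
noncomputable def pH (P : Polynomial ℤ) : ℝ :=
  ((P.support.sup fun i => (P.coeff i).natAbs : ℕ) : ℝ)

/-- Number of positive divisors of an integer (via its absolute value). -/
def tauD (N : ℤ) : ℕ := N.natAbs.divisors.card

/-- An integer polynomial is "reducible" in the sense of the paper: it has a non-constant
integer polynomial factor of strictly smaller degree. -/
def HasProperFactor (P : Polynomial ℤ) : Prop :=
  ∃ A : Polynomial ℤ, 0 < A.natDegree ∧ A.natDegree < P.natDegree ∧ A ∣ P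

/-- Two integer polynomials have no common non-constant factor. -/
def NoCommonFactor (P Q : Polynomial ℤ) : Prop :=
  ∀ A : Polynomial ℤ, A ∣ P → A ∣ Q → A.natDegree = 0

/-- `w_{=n}^*(ξ)`: supremum of all `w` such that `0 < |ξ − α| ≤ H(α)^{−w−1}` holds for
infinitely many real algebraic numbers `α` of degree exactly `n`. -/
noncomputable def wExactStar (n : ℕ) (ξ : ℝ) : EReal :=
  sSup {x : EReal | ∃ w : ℝ, x = (w : EReal) ∧
    {α : ℝ | ∃ P : Polynomial ℤ, Irreducible P ∧ P.natDegree = n ∧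
      Polynomial.aeval α P = 0 ∧ 0 < |ξ - α| ∧ |ξ - α| ≤ pH P ^ (-w - 1)}.Infinite}

/-- `ŵ_n(ξ)`: supremum of all `w` such that for every sufficiently large `X` the system
`H(P) ≤ X`, `0 < |P(ξ)| ≤ X^{−w}` has a solution in integer polynomials of degree at most `n`. -/
noncomputable def wHat (n : ℕ) (ξ : ℝ) : EReal :=
  sSup {x : EReal | ∃ w : ℝ, x = (w : EReal) ∧
    ∀ᶠ X : ℝ in atTop, ∃ P : Polynomial ℤ, P.natDegree ≤ n ∧
      pH P ≤ X ∧ 0 < |Polynomial.aeval ξ P| ∧ |Polynomial.aeval ξ P| ≤ X ^ (-w)}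

/-- `w_{=n}(ξ)`: supremum of all `w` such that for arbitrarily large `X` the system
`H(P) ≤ X`, `0 < |P(ξ)| ≤ X^{−w}` has a solution in irreducible integer polynomials of
degree exactly `n`. -/
noncomputable def wExact (n : ℕ) (ξ : ℝ) : EReal :=
  sSup {x : EReal | ∃ w : ℝ, x = (w : EReal) ∧
    ∃ᶠ X : ℝ in atTop, ∃ P : Polynomial ℤ, Irreducible P ∧ P.natDegree = n ∧
      pH P ≤ X ∧ 0 < |Polynomial.aeval ξ P| ∧ |Polynomial.aeval ξ P| ≤ X ^ (-w)}

/-- `w_{=n}^{int}(ξ)`: as `w_{=n}(ξ)` but with irreducible *monic* integer polynomials. -/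
noncomputable def wExactInt (n : ℕ) (ξ : ℝ) : EReal :=
  sSup {x : EReal | ∃ w : ℝ, x = (w : EReal) ∧
    ∃ᶠ X : ℝ in atTop, ∃ P : Polynomial ℤ, Irreducible P ∧ P.Monic ∧ P.natDegree = n ∧
      pH P ≤ X ∧ 0 < |Polynomial.aeval ξ P| ∧ |Polynomial.aeval ξ P| ≤ X ^ (-w)}

/-- `w_{=n}^{*int}(ξ)`: supremum of all `w` such that `0 < |ξ − α| ≤ H(α)^{−w−1}` holds for
infinitely many real algebraic integers `α` of degree exactly `n`. -/
noncomputable def wExactStarInt (n : ℕ) (ξ : ℝ) : EReal :=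
  sSup {x : EReal | ∃ w : ℝ, x = (w : EReal) ∧
    {α : ℝ | ∃ P : Polynomial ℤ, Irreducible P ∧ P.Monic ∧ P.natDegree = n ∧
      Polynomial.aeval α P = 0 ∧ 0 < |ξ - α| ∧ |ξ - α| ≤ pH P ^ (-w - 1)}.Infinite}

/-- `w_{=n}^{u}(ξ)`: as `w_{=n}(ξ)` but with irreducible monic integer polynomials with
constant coefficient `±1`. -/
noncomputable def wExactU (n : ℕ) (ξ : ℝ) : EReal :=
  sSup {x : EReal | ∃ w : ℝ, x = (w : EReal) ∧
    ∃ᶠ X : ℝ in atTop, ∃ P : Polynomial ℤ, Irreducible P ∧ P.Monic ∧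
      (P.coeff 0 = 1 ∨ P.coeff 0 = -1) ∧ P.natDegree = n ∧
      pH P ≤ X ∧ 0 < |Polynomial.aeval ξ P| ∧ |Polynomial.aeval ξ P| ≤ X ^ (-w)}

/-- `w_{=n}^{*u}(ξ)`: supremum of all `w` such that `0 < |ξ − α| ≤ H(α)^{−w−1}` holds for
infinitely many real algebraic units `α` of degree exactly `n`. -/
noncomputable def wExactStarU (n : ℕ) (ξ : ℝ) : EReal :=
  sSup {x : EReal | ∃ w : ℝ, x = (w : EReal) ∧
    {α : ℝ | ∃ P : Polynomial ℤ, Irreducible P ∧ P.Monic ∧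
      (P.coeff 0 = 1 ∨ P.coeff 0 = -1) ∧ P.natDegree = n ∧
      Polynomial.aeval α P = 0 ∧ 0 < |ξ - α| ∧ |ξ - α| ≤ pH P ^ (-w - 1)}.Infinite}

namespace Aux

/-- Integer divisors (both signs) of `N`, as a finset. -/
def intDivs (N : ℤ) : Finset ℤ :=
  N.natAbs.divisors.image (fun d : ℕ => (d : ℤ)) ∪ N.natAbs.divisors.image (fun d : ℕ => -(d : ℤ))

lemma card_intDivs (N : ℤ) : (intDivs N).card ≤ 2 * tauD N := by
  refine (Finset.card_union_le _ _).trans ?_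
  have h1 := Finset.card_image_le (s := N.natAbs.divisors) (f := fun d : ℕ => (d : ℤ))
  have h2 := Finset.card_image_le (s := N.natAbs.divisors) (f := fun d : ℕ => -(d : ℤ))
  simp only [tauD]; omega

lemma mem_intDivs {x N : ℤ} (h : x ∣ N) (hN : N ≠ 0) : x ∈ intDivs N := by
  have h1 : x.natAbs ∈ N.natAbs.divisors :=
    Nat.mem_divisors.2 ⟨Int.natAbs_dvd_natAbs.2 h, by simpa using hN⟩
  rcases Int.natAbs_eq x with hx | hx
  · exact Finset.mem_union_left _ (Finset.mem_image.2 ⟨x.natAbs, h1, hx.symm⟩)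
  · exact Finset.mem_union_right _ (Finset.mem_image.2 ⟨x.natAbs, h1, hx.symm⟩)

lemma ne_zero_of_mem_intDivs {x N : ℤ} (h : x ∈ intDivs N) : x ≠ 0 := by
  rcases Finset.mem_union.1 h with h' | h' <;>
  · obtain ⟨d, hd, rfl⟩ := Finset.mem_image.1 h'
    have := Nat.pos_of_mem_divisors hd
    simp; omega

lemma ncard_biUnion_le {ι α : Type*} [DecidableEq ι] (T : Finset ι) (f : ι → Set α) :
    (⋃ i ∈ T, f i).ncard ≤ ∑ i ∈ T, (f i).ncard := by
  induction T using Finset.induction with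
  | empty => simp
  | @insert a s ha ih =>
      rw [Finset.set_biUnion_insert, Finset.sum_insert ha]
      exact (Set.ncard_union_le _ _).trans (by omega)

lemma nat_roots_finite {g : Polynomial ℚ} (hg : g ≠ 0) :
    {ℓ : ℕ | g.eval (ℓ : ℚ) = 0}.Finite ∧
      {ℓ : ℕ | g.eval (ℓ : ℚ) = 0}.ncard ≤ g.natDegree := by
  have hinj : Function.Injective (Nat.cast : ℕ → ℚ) := Nat.cast_injective
  have hsub : (Nat.cast : ℕ → ℚ) '' {ℓ : ℕ | g.eval (ℓ : ℚ) = 0} ⊆ ↑g.roots.toFinset := by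
    rintro x ⟨ℓ, hℓ, rfl⟩
    simp only [Finset.coe_sort_coe, Multiset.mem_toFinset, Finset.mem_coe, mem_roots', IsRoot]
    exact ⟨hg, hℓ⟩
  have hfin : {ℓ : ℕ | g.eval (ℓ : ℚ) = 0}.Finite :=
    Set.Finite.of_finite_image ((g.roots.toFinset : Set ℚ).toFinite.subset hsub)
      hinj.injOn
  refine ⟨hfin, ?_⟩
  calc {ℓ : ℕ | g.eval (ℓ : ℚ) = 0}.ncard
      = ((Nat.cast : ℕ → ℚ) '' {ℓ : ℕ | g.eval (ℓ : ℚ) = 0}).ncard :=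
        (Set.ncard_image_of_injective _ hinj).symm
    _ ≤ (↑g.roots.toFinset : Set ℚ).ncard :=
        Set.ncard_le_ncard hsub (g.roots.toFinset : Set ℚ).toFinite
    _ = g.roots.toFinset.card := Set.ncard_coe_finset _
    _ ≤ Multiset.card g.roots := g.roots.toFinset_card_le
    _ ≤ g.natDegree := g.card_roots'

lemma primitive_dvd_of_map_dvd {L P : Polynomial ℤ} (hL : L.IsPrimitive) (hP : P ≠ 0)
    (h : L.map (algebraMap ℤ ℚ) ∣ P.map (algebraMap ℤ ℚ)) : L ∣ P := by
  have hc : ((P.content : ℚ)) ≠ 0 := by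
    simp only [ne_eq, Int.cast_eq_zero]
    exact fun hc => hP (content_eq_zero_iff.1 hc)
  have h2 : L.map (algebraMap ℤ ℚ) ∣ P.primPart.map (algebraMap ℤ ℚ) := by
    obtain ⟨r, hr⟩ := h
    refine ⟨C (P.content : ℚ)⁻¹ * r, ?_⟩
    have hPm : P.map (algebraMap ℤ ℚ) =
        C (P.content : ℚ) * P.primPart.map (algebraMap ℤ ℚ) := by
      conv_lhs => rw [P.eq_C_content_mul_primPart]
      simp [Polynomial.map_mul]
    have : C (P.content : ℚ) * P.primPart.map (algebraMap ℤ ℚ) =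
        L.map (algebraMap ℤ ℚ) * r := by rw [← hPm, hr]
    calc P.primPart.map (algebraMap ℤ ℚ)
        = C (P.content : ℚ)⁻¹ * (C (P.content : ℚ) * P.primPart.map (algebraMap ℤ ℚ)) := by
          rw [← mul_assoc, ← C_mul, inv_mul_cancel₀ hc]; simp
      _ = L.map (algebraMap ℤ ℚ) * (C (P.content : ℚ)⁻¹ * r) := by rw [this]; ring
  exact (hL.dvd_of_fraction_map_dvd_fraction_map h2).trans
    (primPart_dvd P)

lemma linear_isPrimitive {a b : ℤ} (hab : IsCoprime a b) : (C a * X + C b).IsPrimitive := by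
  intro r hr
  rw [C_dvd_iff_dvd_coeff] at hr
  have h1 := hr 1
  have h0 := hr 0
  simp only [coeff_add, coeff_C_mul, coeff_X_one, mul_one, coeff_C, coeff_X_zero,
    mul_zero, if_neg one_ne_zero, add_zero, zero_add, if_pos rfl] at h1 h0
  exact hab.isUnit_of_dvd' h1 h0

lemma linear_map_eq {a b : ℤ} (ha : (a : ℚ) ≠ 0) :
    (C a * X + C b).map (algebraMap ℤ ℚ) = C (a : ℚ) * (X - C (-(b : ℚ) / a)) := by
  rw [neg_div, C_neg, sub_neg_eq_add]
  simp only [Polynomial.map_add, Polynomial.map_mul, map_C, map_X]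
  rw [mul_add, ← C_mul, mul_div_cancel₀ _ ha]
  norm_num

lemma linear_dvd_of_aeval_eq_zero {a b : ℤ} (ha : a ≠ 0) (hab : IsCoprime a b)
    {P : Polynomial ℤ} (hP : P ≠ 0) (h : aeval (-(b : ℚ) / a) P = 0) :
    (C a * X + C b) ∣ P := by
  have haq : (a : ℚ) ≠ 0 := Int.cast_ne_zero.2 ha
  refine primitive_dvd_of_map_dvd (linear_isPrimitive hab) hP ?_
  rw [linear_map_eq haq]
  rw [(isUnit_C.2 (isUnit_iff_ne_zero.2 haq)).mul_left_dvd]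
  refine dvd_iff_isRoot.2 ?_
  rwa [IsRoot, eval_map, ← aeval_def]

end Aux

namespace Aux

open Polynomial

lemma exists_linear_factor {R : Polynomial ℤ} {n : ℕ} (hn3 : n ≤ 3)
    (hdeg : R.natDegree = n) (hR : R ≠ 0) (h : HasProperFactor R) :
    ∃ a b : ℤ, 0 < a ∧ IsCoprime a b ∧ (C a * X + C b) ∣ R := by
  -- first get a degree-1 factor
  obtain ⟨A, hA0, hAn, hAdvd⟩ := h
  have hA1 : ∃ B : Polynomial ℤ, B.natDegree = 1 ∧ B ∣ R := by
    rcases eq_or_ne A.natDegree 1 with h1 | h1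
    · exact ⟨A, h1, hAdvd⟩
    · have hA2 : A.natDegree = 2 := by omega
      obtain ⟨B, hB⟩ := hAdvd
      have hAne : A ≠ 0 := fun h => by simp [h] at hA0
      have hBne : B ≠ 0 := fun h => hR (by simp [hB, h])
      have : A.natDegree + B.natDegree = n := by
        rw [← natDegree_mul hAne hBne, ← hB, hdeg]
      refine ⟨B, by omega, Dvd.intro_left A hB.symm⟩
  obtain ⟨B, hB1, hBdvd⟩ := hA1
  obtain ⟨a1, a0, hBeq⟩ := exists_eq_X_add_C_of_natDegree_le_one hB1.le
  have ha1 : a1 ≠ 0 := by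
    rintro rfl
    simp only [hBeq] at hB1
    simp at hB1
  set g : ℤ := ↑(Int.gcd a1 a0) with hg
  have hgpos : 0 < Int.gcd a1 a0 := Int.gcd_pos_of_ne_zero_left a0 ha1
  have hgne : g ≠ 0 := by simp [hg]; omega
  have hga1 : g ∣ a1 := Int.gcd_dvd_left a1 a0
  have hga0 : g ∣ a0 := Int.gcd_dvd_right a1 a0
  set a : ℤ := a1 / g with ha
  set b : ℤ := a0 / g with hb
  have ha' : a ≠ 0 := by
    rw [ha]
    exact fun h => ha1 (by rw [← Int.ediv_mul_cancel hga1, h, zero_mul])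
  have hcop : IsCoprime a b := by
    rw [Int.isCoprime_iff_gcd_eq_one, ha, hb]
    exact Int.gcd_div_gcd_div_gcd hgpos
  have hfac : C a * X + C b ∣ R := by
    refine dvd_trans ?_ hBdvd
    refine ⟨C g, ?_⟩
    have e1 : g * a = a1 := Int.mul_ediv_cancel' hga1
    have e2 : g * b = a0 := Int.mul_ediv_cancel' hga0
    rw [hBeq, ← e1, ← e2, C_mul, C_mul]
    ring
  rcases lt_or_gt_of_ne ha' with hneg | hpos
  · refine ⟨-a, -b, by omega, hcop.neg_neg, ?_⟩
    have : C (-a) * X + C (-b) = -(C a * X + C b) := by simp; ring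
    rw [this]
    exact (neg_dvd).2 hfac
  · exact ⟨a, b, hpos, hcop, hfac⟩

lemma linear_factor_props {a b : ℤ} (ha : a ≠ 0) {R : Polynomial ℤ}
    (h : (C a * X + C b) ∣ R) :
    a ∣ R.leadingCoeff ∧ b ∣ R.coeff 0 ∧ aeval (-(b : ℚ) / a) R = 0 := by
  obtain ⟨S, hS⟩ := h
  have hlin : (C a * X + C b).natDegree = 1 := by
    rw [natDegree_add_C, natDegree_C_mul ha, natDegree_X]
  have hlc : (C a * X + C b).leadingCoeff = a := by
    rw [leadingCoeff, hlin, coeff_add, coeff_C_mul, coeff_X_one, coeff_C]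
    norm_num
  constructor
  · rw [hS, leadingCoeff_mul, hlc]
    exact Dvd.intro _ rfl
  constructor
  · rw [hS, mul_coeff_zero]
    simp only [coeff_add, coeff_C_mul, coeff_X_zero, mul_zero, coeff_C, if_pos rfl, zero_add]
    exact Dvd.intro _ rfl
  · have haq : (a : ℚ) ≠ 0 := Int.cast_ne_zero.2 ha
    rw [hS, map_mul]
    have : aeval (-(b : ℚ) / a) (C a * X + C b) = 0 := by
      simp only [map_add, map_mul, aeval_C, aeval_X, algebraMap_int_eq, eq_intCast, map_intCast]
      field_simp
      ring
    rw [this, zero_mul]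

/-- Degenerate case: `u • P = v • (X * Q)` over `ℚ` contradicts coprimality. -/
lemma degenerate {P Q : Polynomial ℤ} {n : ℕ} (hn2 : 2 ≤ n) (hPdeg : P.natDegree = n)
    (hPne : P ≠ 0) (hQ0 : Q ≠ 0) (hQdeg : Q.natDegree < n) (hPQ : NoCommonFactor P Q)
    {u v : ℤ} (hu : u ≠ 0) (hv : v ≠ 0)
    (h : C (u : ℚ) * P.map (algebraMap ℤ ℚ) = C (v : ℚ) * X * Q.map (algebraMap ℤ ℚ)) :
    False := by
  have huq : (u : ℚ) ≠ 0 := Int.cast_ne_zero.2 hu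
  have hvq : (v : ℚ) ≠ 0 := Int.cast_ne_zero.2 hv
  have hPm : P.map (algebraMap ℤ ℚ) ≠ 0 := by
    simpa using (Polynomial.map_ne_zero_iff (algebraMap ℤ ℚ).injective_int).2 hPne
  have hQm : Q.map (algebraMap ℤ ℚ) ≠ 0 := by
    simpa using (Polynomial.map_ne_zero_iff (algebraMap ℤ ℚ).injective_int).2 hQ0
  have hdegP : (P.map (algebraMap ℤ ℚ)).natDegree = n := by
    rw [natDegree_map_eq_of_injective (algebraMap ℤ ℚ).injective_int, hPdeg]
  have hdegQ : (Q.map (algebraMap ℤ ℚ)).natDegree = Q.natDegree := by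
    rw [natDegree_map_eq_of_injective (algebraMap ℤ ℚ).injective_int]
  -- degrees
  have hdeg : n = 1 + Q.natDegree := by
    have h1 : (C (u : ℚ) * P.map (algebraMap ℤ ℚ)).natDegree = n := by
      rw [natDegree_C_mul huq, hdegP]
    have h2 : (C (v : ℚ) * X * Q.map (algebraMap ℤ ℚ)).natDegree = 1 + Q.natDegree := by
      rw [natDegree_mul (mul_ne_zero (C_ne_zero.2 hvq) X_ne_zero) hQm, hdegQ]
      rw [natDegree_C_mul hvq, natDegree_X]
    rw [← h1, h, h2]
  have hQpos : 0 < Q.natDegree := by omega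
  -- Qℚ divides Pℚ
  have hdvd : Q.map (algebraMap ℤ ℚ) ∣ P.map (algebraMap ℤ ℚ) := by
    have : Q.map (algebraMap ℤ ℚ) ∣ C (u : ℚ) * P.map (algebraMap ℤ ℚ) :=
      ⟨C (v : ℚ) * X, by rw [h]; ring⟩
    rwa [(isUnit_C.2 (isUnit_iff_ne_zero.2 huq)).dvd_mul_left] at this
  -- primPart Q divides P and Q
  have hQmap : Q.map (algebraMap ℤ ℚ) =
      C (Q.content : ℚ) * Q.primPart.map (algebraMap ℤ ℚ) := by
    conv_lhs => rw [Q.eq_C_content_mul_primPart]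
    simp [Polynomial.map_mul]
  have hppQ : Q.primPart.map (algebraMap ℤ ℚ) ∣ P.map (algebraMap ℤ ℚ) :=
    dvd_trans ⟨C (Q.content : ℚ), by rw [hQmap]; ring⟩ hdvd
  have hcomm : Q.primPart ∣ P :=
    primitive_dvd_of_map_dvd (isPrimitive_primPart Q) hPne hppQ
  have := hPQ Q.primPart hcomm (primPart_dvd Q)
  rw [natDegree_primPart] at this
  omega

end Aux

namespace Aux

open Polynomial Finset

/-- Auxiliary polynomial for the family `ℓ ↦ ℓP + Q` (case `ℓ ∣ a`). -/
noncomputable def G1 (P Q : Polynomial ℤ) (n : ℕ) (p : ℤ × ℤ) : Polynomial ℚ :=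
  ∑ i ∈ Finset.range (n + 1),
    (C ((P.coeff i : ℚ)) * X + C ((Q.coeff i : ℚ))) * C (-(p.2 : ℚ)) ^ i *
      (C ((p.1 : ℚ)) * X) ^ (n - i)

/-- Auxiliary polynomial for the family `ℓ ↦ P + ℓQ` (case `ℓ ∣ b`). -/
noncomputable def G2 (P Q : Polynomial ℤ) (n : ℕ) (p : ℤ × ℤ) : Polynomial ℚ :=
  ∑ i ∈ Finset.range (n + 1),
    (C ((P.coeff i : ℚ)) + C ((Q.coeff i : ℚ)) * X) * (C (-(p.2 : ℚ)) * X) ^ i *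
      C ((p.1 : ℚ)) ^ (n - i)

lemma G1_natDegree_le (P Q : Polynomial ℤ) (n : ℕ) (p : ℤ × ℤ) :
    (G1 P Q n p).natDegree ≤ n + 1 := by
  refine natDegree_sum_le_of_forall_le _ _ fun i hi => ?_
  have hi' : i ≤ n := Nat.lt_succ_iff.1 (Finset.mem_range.1 hi)
  have h1 : (C ((P.coeff i : ℚ)) * X + C ((Q.coeff i : ℚ))).natDegree ≤ 1 := by
    refine (natDegree_add_le _ _).trans (max_le ?_ (by simp))
    exact natDegree_mul_le.trans (by simp)
  have h2 : (C (-(p.2 : ℚ)) ^ i).natDegree = 0 := by simp [natDegree_pow]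
  have h3 : ((C ((p.1 : ℚ)) * X) ^ (n - i)).natDegree ≤ n - i := by
    refine natDegree_pow_le.trans ?_
    have : (C ((p.1 : ℚ)) * X).natDegree ≤ 1 := natDegree_mul_le.trans (by simp)
    nlinarith
  have h4 := natDegree_mul_le (p := (C ((P.coeff i : ℚ)) * X + C ((Q.coeff i : ℚ))) *
    C (-(p.2 : ℚ)) ^ i) (q := (C ((p.1 : ℚ)) * X) ^ (n - i))
  have h5 := natDegree_mul_le (p := C ((P.coeff i : ℚ)) * X + C ((Q.coeff i : ℚ)))
    (q := C (-(p.2 : ℚ)) ^ i)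
  omega

lemma G2_natDegree_le (P Q : Polynomial ℤ) (n : ℕ) (p : ℤ × ℤ) :
    (G2 P Q n p).natDegree ≤ n + 1 := by
  refine natDegree_sum_le_of_forall_le _ _ fun i hi => ?_
  have hi' : i ≤ n := Nat.lt_succ_iff.1 (Finset.mem_range.1 hi)
  have h1 : (C ((P.coeff i : ℚ)) + C ((Q.coeff i : ℚ)) * X).natDegree ≤ 1 := by
    refine (natDegree_add_le _ _).trans (max_le (by simp) ?_)
    exact natDegree_mul_le.trans (by simp)
  have h2 : ((C (-(p.2 : ℚ)) * X) ^ i).natDegree ≤ i := by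
    refine natDegree_pow_le.trans ?_
    have : (C (-(p.2 : ℚ)) * X).natDegree ≤ 1 := natDegree_mul_le.trans (by simp)
    nlinarith
  have h3 : (C ((p.1 : ℚ)) ^ (n - i)).natDegree = 0 := by simp [natDegree_pow]
  have h4 := natDegree_mul_le (p := (C ((P.coeff i : ℚ)) + C ((Q.coeff i : ℚ)) * X) *
    (C (-(p.2 : ℚ)) * X) ^ i) (q := C ((p.1 : ℚ)) ^ (n - i))
  have h5 := natDegree_mul_le (p := C ((P.coeff i : ℚ)) + C ((Q.coeff i : ℚ)) * X)
    (q := (C (-(p.2 : ℚ)) * X) ^ i)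
  omega

lemma G1_eval {P Q : Polynomial ℤ} {n : ℕ} (hP : P.natDegree = n) (hQ : Q.natDegree < n)
    {a b : ℤ} (ha : (a : ℚ) ≠ 0) {t : ℚ} (ht : t ≠ 0) :
    (G1 P Q n (a, b)).eval t =
      ((a : ℚ) * t) ^ n *
        (t * aeval (-(b : ℚ) / ((a : ℚ) * t)) P + aeval (-(b : ℚ) / ((a : ℚ) * t)) Q) := by
  set u : ℚ := (a : ℚ) * t with hu_def
  have hu : u ≠ 0 := mul_ne_zero ha ht
  set x : ℚ := -(b : ℚ) / u with hx_def
  have haP : aeval x P = ∑ i ∈ Finset.range (n + 1), (P.coeff i : ℚ) * x ^ i := by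
    rw [aeval_eq_sum_range' (by omega : P.natDegree < n + 1)]
    simp [zsmul_eq_mul]
  have haQ : aeval x Q = ∑ i ∈ Finset.range (n + 1), (Q.coeff i : ℚ) * x ^ i := by
    rw [aeval_eq_sum_range' (by omega : Q.natDegree < n + 1)]
    simp [zsmul_eq_mul]
  rw [haP, haQ]
  have hRHS : u ^ n * (t * (∑ i ∈ Finset.range (n + 1), (P.coeff i : ℚ) * x ^ i) +
      ∑ i ∈ Finset.range (n + 1), (Q.coeff i : ℚ) * x ^ i) =
      ∑ i ∈ Finset.range (n + 1),
        u ^ n * (t * ((P.coeff i : ℚ) * x ^ i) + (Q.coeff i : ℚ) * x ^ i) := by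
    rw [Finset.mul_sum, ← Finset.sum_add_distrib, Finset.mul_sum]
  rw [hRHS]
  rw [G1, eval_finset_sum]
  refine Finset.sum_congr rfl fun i hi => ?_
  have hin : i ≤ n := Nat.lt_succ_iff.1 (Finset.mem_range.1 hi)
  have hsplit : u ^ n = u ^ (n - i) * u ^ i := by
    rw [← pow_add, Nat.sub_add_cancel hin]
  have hx : x ^ i * u ^ i = (-(b : ℚ)) ^ i := by
    rw [hx_def, div_pow, div_mul_cancel₀ _ (pow_ne_zero _ hu)]
  simp only [eval_mul, eval_add, eval_pow, eval_C, eval_X]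
  rw [hsplit]
  linear_combination (-(u ^ (n - i) * (t * (P.coeff i : ℚ) + (Q.coeff i : ℚ)))) * hx

lemma G2_eval {P Q : Polynomial ℤ} {n : ℕ} (hP : P.natDegree = n) (hQ : Q.natDegree < n)
    {a b : ℤ} (ha : (a : ℚ) ≠ 0) {t : ℚ} (ht : t ≠ 0) :
    (G2 P Q n (a, b)).eval t =
      (a : ℚ) ^ n *
        (aeval (-(b : ℚ) * t / (a : ℚ)) P + t * aeval (-(b : ℚ) * t / (a : ℚ)) Q) := by
  set x : ℚ := -(b : ℚ) * t / (a : ℚ) with hx_def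
  have haP : aeval x P = ∑ i ∈ Finset.range (n + 1), (P.coeff i : ℚ) * x ^ i := by
    rw [aeval_eq_sum_range' (by omega : P.natDegree < n + 1)]
    simp [zsmul_eq_mul]
  have haQ : aeval x Q = ∑ i ∈ Finset.range (n + 1), (Q.coeff i : ℚ) * x ^ i := by
    rw [aeval_eq_sum_range' (by omega : Q.natDegree < n + 1)]
    simp [zsmul_eq_mul]
  rw [haP, haQ]
  have hRHS : (a : ℚ) ^ n * ((∑ i ∈ Finset.range (n + 1), (P.coeff i : ℚ) * x ^ i) +
      t * ∑ i ∈ Finset.range (n + 1), (Q.coeff i : ℚ) * x ^ i) =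
      ∑ i ∈ Finset.range (n + 1),
        (a : ℚ) ^ n * ((P.coeff i : ℚ) * x ^ i + t * ((Q.coeff i : ℚ) * x ^ i)) := by
    rw [Finset.mul_sum, ← Finset.sum_add_distrib, Finset.mul_sum]
  rw [hRHS]
  rw [G2, eval_finset_sum]
  refine Finset.sum_congr rfl fun i hi => ?_
  have hin : i ≤ n := Nat.lt_succ_iff.1 (Finset.mem_range.1 hi)
  have hsplit : (a : ℚ) ^ n = (a : ℚ) ^ (n - i) * (a : ℚ) ^ i := by
    rw [← pow_add, Nat.sub_add_cancel hin]
  have hx : x ^ i * (a : ℚ) ^ i = (-(b : ℚ) * t) ^ i := by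
    rw [hx_def, div_pow, div_mul_cancel₀ _ (pow_ne_zero _ ha)]
  simp only [eval_mul, eval_add, eval_pow, eval_C, eval_X]
  rw [hsplit]
  linear_combination (-((a : ℚ) ^ (n - i) * ((P.coeff i : ℚ) + t * (Q.coeff i : ℚ)))) * hx

end Aux

namespace Aux

open Polynomial

lemma eval_map_eq_aeval (P : Polynomial ℤ) (x : ℚ) :
    (P.map (algebraMap ℤ ℚ)).eval x = aeval x P := by
  rw [aeval_def, eval_map]

lemma G1_ne_zero {P Q : Polynomial ℤ} {n : ℕ} (hn2 : 2 ≤ n) (hPdeg : P.natDegree = n)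
    (hPne : P ≠ 0) (hQ0 : Q ≠ 0) (hQdeg : Q.natDegree < n) (hPQ : NoCommonFactor P Q)
    {a b : ℤ} (ha : a ≠ 0) (hb : b ≠ 0) : G1 P Q n (a, b) ≠ 0 := by
  intro h0
  have haq : (a : ℚ) ≠ 0 := Int.cast_ne_zero.2 ha
  have hbq : (b : ℚ) ≠ 0 := Int.cast_ne_zero.2 hb
  have key : ∀ x : ℚ, x ≠ 0 →
      (b : ℚ) * aeval x P = (a : ℚ) * x * aeval x Q := by
    intro x hx
    set t : ℚ := -(b : ℚ) / ((a : ℚ) * x) with ht_def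
    have ht : t ≠ 0 := by
      rw [ht_def]
      exact div_ne_zero (neg_ne_zero.2 hbq) (mul_ne_zero haq hx)
    have hxt : -(b : ℚ) / ((a : ℚ) * t) = x := by
      rw [ht_def]
      field_simp
      try ring
    have he := G1_eval hPdeg hQdeg haq ht (b := b)
    rw [h0] at he
    simp only [eval_zero] at he
    rw [hxt] at he
    have hunit : ((a : ℚ) * t) ^ n ≠ 0 := pow_ne_zero _ (mul_ne_zero haq ht)
    have heq : t * aeval x P + aeval x Q = 0 := by
      rcases mul_eq_zero.1 he.symm with h | h
      · exact absurd h hunit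
      · exact h
    have htx : t * ((a : ℚ) * x) = -(b : ℚ) := by
      rw [ht_def]
      field_simp
      try ring
    linear_combination (-((a : ℚ) * x)) * heq + (aeval x P) * htx
  have hpoly : C (b : ℚ) * P.map (algebraMap ℤ ℚ) =
      C (a : ℚ) * X * Q.map (algebraMap ℤ ℚ) := by
    apply Polynomial.eq_of_infinite_eval_eq
    have hsub : {x : ℚ | x ≠ 0} ⊆
        {x : ℚ | eval x (C (b : ℚ) * P.map (algebraMap ℤ ℚ)) =
          eval x (C (a : ℚ) * X * Q.map (algebraMap ℤ ℚ))} := by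
      intro x hx
      simp only [Set.mem_setOf_eq, eval_mul, eval_C, eval_X, eval_map_eq_aeval]
      exact key x hx
    refine Set.Infinite.mono hsub ?_
    have : {x : ℚ | x ≠ 0} = ({0} : Set ℚ)ᶜ := by ext y; simp
    rw [this]
    exact Set.Finite.infinite_compl (Set.finite_singleton 0)
  exact degenerate hn2 hPdeg hPne hQ0 hQdeg hPQ hb ha hpoly

lemma G2_ne_zero {P Q : Polynomial ℤ} {n : ℕ} (hn2 : 2 ≤ n) (hPdeg : P.natDegree = n)
    (hPne : P ≠ 0) (hQ0 : Q ≠ 0) (hQdeg : Q.natDegree < n) (hPQ : NoCommonFactor P Q)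
    {a b : ℤ} (ha : a ≠ 0) (hb : b ≠ 0) : G2 P Q n (a, b) ≠ 0 := by
  intro h0
  have haq : (a : ℚ) ≠ 0 := Int.cast_ne_zero.2 ha
  have hbq : (b : ℚ) ≠ 0 := Int.cast_ne_zero.2 hb
  have key : ∀ x : ℚ, x ≠ 0 →
      (b : ℚ) * aeval x P = (a : ℚ) * x * aeval x Q := by
    intro x hx
    set t : ℚ := -((a : ℚ) * x) / (b : ℚ) with ht_def
    have ht : t ≠ 0 := by
      rw [ht_def]
      exact div_ne_zero (neg_ne_zero.2 (mul_ne_zero haq hx)) hbq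
    have hxt : -(b : ℚ) * t / (a : ℚ) = x := by
      rw [ht_def]
      field_simp
      try ring
    have he := G2_eval hPdeg hQdeg haq ht (b := b)
    rw [h0] at he
    simp only [eval_zero] at he
    rw [hxt] at he
    have hunit : ((a : ℚ)) ^ n ≠ 0 := pow_ne_zero _ haq
    have heq : aeval x P + t * aeval x Q = 0 := by
      rcases mul_eq_zero.1 he.symm with h | h
      · exact absurd h hunit
      · exact h
    have htx : t * (b : ℚ) = -((a : ℚ) * x) := by
      rw [ht_def]
      field_simp
      try ring
    linear_combination (b : ℚ) * heq - (aeval x Q) * htx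
  have hpoly : C (b : ℚ) * P.map (algebraMap ℤ ℚ) =
      C (a : ℚ) * X * Q.map (algebraMap ℤ ℚ) := by
    apply Polynomial.eq_of_infinite_eval_eq
    have hsub : {x : ℚ | x ≠ 0} ⊆
        {x : ℚ | eval x (C (b : ℚ) * P.map (algebraMap ℤ ℚ)) =
          eval x (C (a : ℚ) * X * Q.map (algebraMap ℤ ℚ))} := by
      intro x hx
      simp only [Set.mem_setOf_eq, eval_mul, eval_C, eval_X, eval_map_eq_aeval]
      exact key x hx
    refine Set.Infinite.mono hsub ?_
    have : {x : ℚ | x ≠ 0} = ({0} : Set ℚ)ᶜ := by ext y; simp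
    rw [this]
    exact Set.Finite.infinite_compl (Set.finite_singleton 0)
  exact degenerate hn2 hPdeg hPne hQ0 hQdeg hPQ hb ha hpoly

end Aux

namespace Aux

open Polynomial

lemma count_family1 {n : ℕ} (hn2 : 2 ≤ n) (hn3 : n ≤ 3) (P Q : Polynomial ℤ)
    (hPQ : NoCommonFactor P Q) (hPdeg : P.natDegree = n) (hP0 : P.coeff 0 = 0)
    (hQ0 : Q ≠ 0) (hQdeg : Q.natDegree < n) (hd0 : Q.coeff 0 ≠ 0) :
    {ℓ : ℕ | ℓ.Prime ∧ HasProperFactor ((ℓ : ℤ) • P + Q)}.Finite ∧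
      {ℓ : ℕ | ℓ.Prime ∧ HasProperFactor ((ℓ : ℤ) • P + Q)}.ncard ≤
        20 * tauD P.leadingCoeff * tauD (Q.coeff 0) := by
  classical
  set cn : ℤ := P.leadingCoeff with hcn_def
  set d0 : ℤ := Q.coeff 0 with hd0_def
  set Bad : Set ℕ := {ℓ : ℕ | ℓ.Prime ∧ HasProperFactor ((ℓ : ℤ) • P + Q)} with hBad_def
  have hPne : P ≠ 0 := fun h => by rw [h] at hPdeg; simp at hPdeg; omega
  have hcn : cn ≠ 0 := leadingCoeff_ne_zero.2 hPne
  have main : ∀ ℓ : ℕ, ∃ a b : ℤ, ℓ ∈ Bad →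
      0 < a ∧ IsCoprime a b ∧ a ∣ (ℓ : ℤ) * cn ∧ b ∣ d0 ∧
      ((ℓ : ℚ) * aeval (-(b : ℚ) / a) P + aeval (-(b : ℚ) / a) Q = 0) ∧
      aeval (-(b : ℚ) / a) P ≠ 0 := by
    intro ℓ
    by_cases hmem : ℓ ∈ Bad
    swap
    · exact ⟨1, 1, fun h => absurd h hmem⟩
    obtain ⟨hprime, hred⟩ := hmem
    set R : Polynomial ℤ := (ℓ : ℤ) • P + Q with hR_def
    have hlne : (ℓ : ℤ) ≠ 0 := by
      exact_mod_cast hprime.ne_zero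
    have hRcoeff : ∀ k, R.coeff k = ℓ * P.coeff k + Q.coeff k := by
      intro k; simp [hR_def, coeff_smul, smul_eq_mul]
    have hRn : R.coeff n = ℓ * cn := by
      rw [hRcoeff, coeff_eq_zero_of_natDegree_lt hQdeg, add_zero, hcn_def,
        leadingCoeff, hPdeg]
    have hRne0 : R.coeff n ≠ 0 := by rw [hRn]; exact mul_ne_zero hlne hcn
    have hRdeg : R.natDegree = n := by
      refine le_antisymm ?_ (le_natDegree_of_ne_zero hRne0)
      refine (natDegree_add_le _ _).trans (max_le ?_ hQdeg.le)
      exact (natDegree_smul_le _ _).trans hPdeg.le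
    have hRne : R ≠ 0 := fun h => hRne0 (by rw [h]; simp)
    obtain ⟨a, b, hapos, hcop, hdvd⟩ := exists_linear_factor hn3 hRdeg hRne hred
    have ha : a ≠ 0 := ne_of_gt hapos
    obtain ⟨hlc, h0c, hroot⟩ := linear_factor_props ha hdvd
    refine ⟨a, b, fun _ => ⟨hapos, hcop, ?_, ?_, ?_, ?_⟩⟩
    · rwa [leadingCoeff, hRdeg, hRn] at hlc
    · rwa [hRcoeff, hP0, mul_zero, zero_add] at h0c
    · have : aeval (-(b : ℚ) / a) R =
          (ℓ : ℚ) * aeval (-(b : ℚ) / a) P + aeval (-(b : ℚ) / a) Q := by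
        rw [hR_def]
        have : (ℓ : ℤ) • P = C (ℓ : ℤ) * P := smul_eq_C_mul _
        rw [map_add, this, map_mul, aeval_C]
        push_cast
        ring
      rw [← this, hroot]
    · intro hp
      have hq : aeval (-(b : ℚ) / a) Q = 0 := by
        have : aeval (-(b : ℚ) / a) R =
            (ℓ : ℚ) * aeval (-(b : ℚ) / a) P + aeval (-(b : ℚ) / a) Q := by
          rw [hR_def]
          have h' : (ℓ : ℤ) • P = C (ℓ : ℤ) * P := smul_eq_C_mul _
          rw [map_add, h', map_mul, aeval_C]
          push_cast
          ring
        rw [hroot] at this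
        rw [hp, mul_zero, zero_add] at this
        exact this.symm
      have hLP := linear_dvd_of_aeval_eq_zero ha hcop hPne hp
      have hLQ := linear_dvd_of_aeval_eq_zero ha hcop hQ0 hq
      have := hPQ _ hLP hLQ
      rw [natDegree_add_C, natDegree_C_mul ha, natDegree_X] at this
      exact one_ne_zero this
  choose A B hmain using main
  have hinj : Set.InjOn (fun ℓ => (A ℓ, B ℓ)) Bad := by
    intro ℓ hℓ ℓ' hℓ' heq
    obtain ⟨-, -, -, -, he1, hp1⟩ := hmain ℓ hℓ
    obtain ⟨-, -, -, -, he2, -⟩ := hmain ℓ' hℓ'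
    have hA : A ℓ = A ℓ' := congrArg Prod.fst heq
    have hB : B ℓ = B ℓ' := congrArg Prod.snd heq
    rw [← hA, ← hB] at he2
    have : (ℓ : ℚ) = (ℓ' : ℚ) := by
      have hsub : ((ℓ : ℚ) - (ℓ' : ℚ)) * aeval (-(B ℓ : ℚ) / (A ℓ : ℚ)) P = 0 := by
        linear_combination he1 - he2
      rcases mul_eq_zero.1 hsub with h | h
      · exact sub_eq_zero.1 h
      · exact absurd h hp1
    exact_mod_cast this
  set T1 : Finset (ℤ × ℤ) := intDivs cn ×ˢ intDivs d0 with hT1_def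
  have hT1card : T1.card ≤ (2 * tauD cn) * (2 * tauD d0) := by
    rw [hT1_def, Finset.card_product]
    exact Nat.mul_le_mul (card_intDivs cn) (card_intDivs d0)
  set Bad1 : Set ℕ := Bad ∩ {ℓ | A ℓ ∣ cn} with hBad1_def
  set Bad2 : Set ℕ := Bad ∩ {ℓ | ¬ A ℓ ∣ cn} with hBad2_def
  have hsplit : Bad = Bad1 ∪ Bad2 := by
    ext ℓ; by_cases h : A ℓ ∣ cn <;> simp [hBad1_def, hBad2_def, h]
  -- Bad1
  have hmapsTo : ∀ ℓ ∈ Bad1, (A ℓ, B ℓ) ∈ (T1 : Set (ℤ × ℤ)) := by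
    rintro ℓ ⟨hℓ, hAdvd⟩
    obtain ⟨-, -, -, hB, -, -⟩ := hmain ℓ hℓ
    simp only [hT1_def, Finset.coe_product, Set.mem_prod]
    exact ⟨mem_intDivs hAdvd hcn, mem_intDivs hB hd0⟩
  have hBad1card : Bad1.ncard ≤ T1.card := by
    rw [← Set.ncard_coe_finset]
    exact Set.ncard_le_ncard_of_injOn _ hmapsTo
      (hinj.mono Set.inter_subset_left) (T1 : Set (ℤ × ℤ)).toFinite
  have hBad1fin : Bad1.Finite := by
    refine Set.Finite.of_finite_image ?_ (hinj.mono Set.inter_subset_left)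
    exact (T1 : Set (ℤ × ℤ)).toFinite.subset (Set.image_subset_iff.2 hmapsTo)
  -- Bad2
  have hBad2sub : Bad2 ⊆ ⋃ p ∈ T1, {ℓ : ℕ | (G1 P Q n p).eval (ℓ : ℚ) = 0} := by
    rintro ℓ ⟨hℓ, hAndvd⟩
    obtain ⟨hapos, hcop, hadvd, hbdvd, heq, hpne⟩ := hmain ℓ hℓ
    have hprime := hℓ.1
    have hlne : (ℓ : ℤ) ≠ 0 := by exact_mod_cast hprime.ne_zero
    have hbne : B ℓ ≠ 0 := by
      intro h; rw [h] at hbdvd; exact hd0 (zero_dvd_iff.1 hbdvd)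
    -- ℓ divides A ℓ
    have hldvd : (ℓ : ℤ) ∣ A ℓ := by
      by_contra hnd
      apply hAndvd
      have hln : ¬ ℓ ∣ (A ℓ).natAbs := fun h => hnd (Int.dvd_natAbs.1 (Int.ofNat_dvd.2 h))
      have hcp : Nat.Coprime (A ℓ).natAbs ℓ :=
        ((Nat.Prime.coprime_iff_not_dvd hprime).2 hln).symm
      have hd : (A ℓ).natAbs ∣ ℓ * cn.natAbs := by
        have := Int.natAbs_dvd_natAbs.2 hadvd
        rwa [Int.natAbs_mul, Int.natAbs_natCast] at this
      have := Nat.Coprime.dvd_of_dvd_mul_left hcp hd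
      exact Int.natAbs_dvd_natAbs.1 this
    obtain ⟨a', ha'⟩ := hldvd
    have ha'ne : a' ≠ 0 := by
      rintro rfl; rw [mul_zero] at ha'; exact (ne_of_gt hapos) ha'
    have ha'dvd : a' ∣ cn := by
      have : (ℓ : ℤ) * a' ∣ (ℓ : ℤ) * cn := ha' ▸ hadvd
      exact (mul_dvd_mul_iff_left hlne).1 this
    have hpmem : (a', B ℓ) ∈ T1 := by
      rw [hT1_def, Finset.mem_product]
      exact ⟨mem_intDivs ha'dvd hcn, mem_intDivs hbdvd hd0⟩
    refine Set.mem_biUnion hpmem ?_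
    have hlq : (ℓ : ℚ) ≠ 0 := by exact_mod_cast hprime.ne_zero
    have ha'q : (a' : ℚ) ≠ 0 := Int.cast_ne_zero.2 ha'ne
    have hx : -(B ℓ : ℚ) / ((a' : ℚ) * (ℓ : ℚ)) = -(B ℓ : ℚ) / (A ℓ : ℚ) := by
      rw [ha']; push_cast; ring_nf
    show (G1 P Q n (a', B ℓ)).eval (ℓ : ℚ) = 0
    rw [G1_eval hPdeg hQdeg ha'q hlq, hx, heq, mul_zero]
  have hRootFin : ∀ p ∈ T1, {ℓ : ℕ | (G1 P Q n p).eval (ℓ : ℚ) = 0}.Finite ∧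
      {ℓ : ℕ | (G1 P Q n p).eval (ℓ : ℚ) = 0}.ncard ≤ 4 := by
    intro p hp
    rw [hT1_def, Finset.mem_product] at hp
    have h1 : p.1 ≠ 0 := ne_zero_of_mem_intDivs hp.1
    have h2 : p.2 ≠ 0 := ne_zero_of_mem_intDivs hp.2
    have hGne : G1 P Q n p ≠ 0 := by
      have := G1_ne_zero hn2 hPdeg hPne hQ0 hQdeg hPQ h1 h2
      simpa using this
    obtain ⟨hfin, hcard⟩ := nat_roots_finite hGne
    exact ⟨hfin, hcard.trans ((G1_natDegree_le P Q n p).trans (by omega))⟩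
  have hBad2fin : Bad2.Finite := by
    refine Set.Finite.subset (Set.Finite.biUnion T1.finite_toSet
      fun p hp => (hRootFin p hp).1) hBad2sub
  have hBad2card : Bad2.ncard ≤ 4 * T1.card := by
    calc Bad2.ncard ≤ (⋃ p ∈ T1, {ℓ : ℕ | (G1 P Q n p).eval (ℓ : ℚ) = 0}).ncard :=
          Set.ncard_le_ncard hBad2sub
            (Set.Finite.biUnion T1.finite_toSet fun p hp => (hRootFin p hp).1)
      _ ≤ ∑ p ∈ T1, {ℓ : ℕ | (G1 P Q n p).eval (ℓ : ℚ) = 0}.ncard := ncard_biUnion_le _ _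
      _ ≤ ∑ _p ∈ T1, 4 := Finset.sum_le_sum fun p hp => (hRootFin p hp).2
      _ = 4 * T1.card := by rw [Finset.sum_const, smul_eq_mul, mul_comm]
  have hfin : Bad.Finite := by rw [hsplit]; exact hBad1fin.union hBad2fin
  refine ⟨hfin, ?_⟩
  calc Bad.ncard ≤ Bad1.ncard + Bad2.ncard := by
        rw [hsplit]; exact Set.ncard_union_le _ _
    _ ≤ T1.card + 4 * T1.card := Nat.add_le_add hBad1card hBad2card
    _ = 5 * T1.card := by ring
    _ ≤ 5 * ((2 * tauD cn) * (2 * tauD d0)) := Nat.mul_le_mul_left _ hT1card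
    _ = 20 * tauD cn * tauD d0 := by ring

end Aux

namespace Aux

open Polynomial

lemma count_family2 {n : ℕ} (hn2 : 2 ≤ n) (hn3 : n ≤ 3) (P Q : Polynomial ℤ)
    (hPQ : NoCommonFactor P Q) (hPdeg : P.natDegree = n) (hP0 : P.coeff 0 = 0)
    (hQ0 : Q ≠ 0) (hQdeg : Q.natDegree < n) (hd0 : Q.coeff 0 ≠ 0) :
    {ℓ : ℕ | ℓ.Prime ∧ HasProperFactor (P + (ℓ : ℤ) • Q)}.Finite ∧
      {ℓ : ℕ | ℓ.Prime ∧ HasProperFactor (P + (ℓ : ℤ) • Q)}.ncard ≤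
        20 * tauD P.leadingCoeff * tauD (Q.coeff 0) := by
  classical
  set cn : ℤ := P.leadingCoeff with hcn_def
  set d0 : ℤ := Q.coeff 0 with hd0_def
  set Bad : Set ℕ := {ℓ : ℕ | ℓ.Prime ∧ HasProperFactor (P + (ℓ : ℤ) • Q)} with hBad_def
  have hPne : P ≠ 0 := fun h => by rw [h] at hPdeg; simp at hPdeg; omega
  have hcn : cn ≠ 0 := leadingCoeff_ne_zero.2 hPne
  have main : ∀ ℓ : ℕ, ∃ a b : ℤ, ℓ ∈ Bad →
      0 < a ∧ IsCoprime a b ∧ a ∣ cn ∧ b ∣ (ℓ : ℤ) * d0 ∧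
      (aeval (-(b : ℚ) / a) P + (ℓ : ℚ) * aeval (-(b : ℚ) / a) Q = 0) ∧
      aeval (-(b : ℚ) / a) Q ≠ 0 := by
    intro ℓ
    by_cases hmem : ℓ ∈ Bad
    swap
    · exact ⟨1, 1, fun h => absurd h hmem⟩
    obtain ⟨hprime, hred⟩ := hmem
    set R : Polynomial ℤ := P + (ℓ : ℤ) • Q with hR_def
    have hlne : (ℓ : ℤ) ≠ 0 := by exact_mod_cast hprime.ne_zero
    have hRcoeff : ∀ k, R.coeff k = P.coeff k + ℓ * Q.coeff k := by
      intro k; simp [hR_def, coeff_smul, smul_eq_mul]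
    have hRn : R.coeff n = cn := by
      rw [hRcoeff, coeff_eq_zero_of_natDegree_lt hQdeg, mul_zero, add_zero, hcn_def,
        leadingCoeff, hPdeg]
    have hRne0 : R.coeff n ≠ 0 := by rw [hRn]; exact hcn
    have hRdeg : R.natDegree = n := by
      refine le_antisymm ?_ (le_natDegree_of_ne_zero hRne0)
      refine (natDegree_add_le _ _).trans (max_le hPdeg.le ?_)
      exact (natDegree_smul_le _ _).trans hQdeg.le
    have hRne : R ≠ 0 := fun h => hRne0 (by rw [h]; simp)
    obtain ⟨a, b, hapos, hcop, hdvd⟩ := exists_linear_factor hn3 hRdeg hRne hred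
    have ha : a ≠ 0 := ne_of_gt hapos
    obtain ⟨hlc, h0c, hroot⟩ := linear_factor_props ha hdvd
    have haev : aeval (-(b : ℚ) / a) R =
        aeval (-(b : ℚ) / a) P + (ℓ : ℚ) * aeval (-(b : ℚ) / a) Q := by
      rw [hR_def]
      have h' : (ℓ : ℤ) • Q = C (ℓ : ℤ) * Q := smul_eq_C_mul _
      rw [map_add, h', map_mul, aeval_C]
      push_cast
      ring
    refine ⟨a, b, fun _ => ⟨hapos, hcop, ?_, ?_, ?_, ?_⟩⟩
    · rwa [leadingCoeff, hRdeg, hRn] at hlc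
    · rwa [hRcoeff, hP0, zero_add] at h0c
    · rw [← haev, hroot]
    · intro hq
      have hp : aeval (-(b : ℚ) / a) P = 0 := by
        rw [hroot] at haev
        rw [hq, mul_zero, add_zero] at haev
        exact haev.symm
      have hLP := linear_dvd_of_aeval_eq_zero ha hcop hPne hp
      have hLQ := linear_dvd_of_aeval_eq_zero ha hcop hQ0 hq
      have := hPQ _ hLP hLQ
      rw [natDegree_add_C, natDegree_C_mul ha, natDegree_X] at this
      exact one_ne_zero this
  choose A B hmain using main
  have hinj : Set.InjOn (fun ℓ => (A ℓ, B ℓ)) Bad := by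
    intro ℓ hℓ ℓ' hℓ' heq
    obtain ⟨-, -, -, -, he1, hq1⟩ := hmain ℓ hℓ
    obtain ⟨-, -, -, -, he2, -⟩ := hmain ℓ' hℓ'
    have hA : A ℓ = A ℓ' := congrArg Prod.fst heq
    have hB : B ℓ = B ℓ' := congrArg Prod.snd heq
    rw [← hA, ← hB] at he2
    have : (ℓ : ℚ) = (ℓ' : ℚ) := by
      have hsub : ((ℓ : ℚ) - (ℓ' : ℚ)) * aeval (-(B ℓ : ℚ) / (A ℓ : ℚ)) Q = 0 := by
        linear_combination he1 - he2
      rcases mul_eq_zero.1 hsub with h | h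
      · exact sub_eq_zero.1 h
      · exact absurd h hq1
    exact_mod_cast this
  set T1 : Finset (ℤ × ℤ) := intDivs cn ×ˢ intDivs d0 with hT1_def
  have hT1card : T1.card ≤ (2 * tauD cn) * (2 * tauD d0) := by
    rw [hT1_def, Finset.card_product]
    exact Nat.mul_le_mul (card_intDivs cn) (card_intDivs d0)
  set Bad1 : Set ℕ := Bad ∩ {ℓ | B ℓ ∣ d0} with hBad1_def
  set Bad2 : Set ℕ := Bad ∩ {ℓ | ¬ B ℓ ∣ d0} with hBad2_def
  have hsplit : Bad = Bad1 ∪ Bad2 := by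
    ext ℓ; by_cases h : B ℓ ∣ d0 <;> simp [hBad1_def, hBad2_def, h]
  -- Bad1
  have hmapsTo : ∀ ℓ ∈ Bad1, (A ℓ, B ℓ) ∈ (T1 : Set (ℤ × ℤ)) := by
    rintro ℓ ⟨hℓ, hBdvd⟩
    obtain ⟨-, -, hA, -, -, -⟩ := hmain ℓ hℓ
    simp only [hT1_def, Finset.coe_product, Set.mem_prod]
    exact ⟨mem_intDivs hA hcn, mem_intDivs hBdvd hd0⟩
  have hBad1card : Bad1.ncard ≤ T1.card := by
    rw [← Set.ncard_coe_finset]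
    exact Set.ncard_le_ncard_of_injOn _ hmapsTo
      (hinj.mono Set.inter_subset_left) (T1 : Set (ℤ × ℤ)).toFinite
  have hBad1fin : Bad1.Finite := by
    refine Set.Finite.of_finite_image ?_ (hinj.mono Set.inter_subset_left)
    exact (T1 : Set (ℤ × ℤ)).toFinite.subset (Set.image_subset_iff.2 hmapsTo)
  -- Bad2
  have hBad2sub : Bad2 ⊆ ⋃ p ∈ T1, {ℓ : ℕ | (G2 P Q n p).eval (ℓ : ℚ) = 0} := by
    rintro ℓ ⟨hℓ, hBndvd⟩
    obtain ⟨hapos, hcop, hadvd, hbdvd, heq, hqne⟩ := hmain ℓ hℓ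
    have hprime := hℓ.1
    have hlne : (ℓ : ℤ) ≠ 0 := by exact_mod_cast hprime.ne_zero
    have hane : A ℓ ≠ 0 := ne_of_gt hapos
    have hbne : B ℓ ≠ 0 := by
      intro h; rw [h] at hbdvd
      exact mul_ne_zero hlne hd0 (zero_dvd_iff.1 hbdvd)
    -- ℓ divides B ℓ
    have hldvd : (ℓ : ℤ) ∣ B ℓ := by
      by_contra hnd
      apply hBndvd
      have hln : ¬ ℓ ∣ (B ℓ).natAbs := fun h => hnd (Int.dvd_natAbs.1 (Int.ofNat_dvd.2 h))
      have hcp : Nat.Coprime (B ℓ).natAbs ℓ :=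
        ((Nat.Prime.coprime_iff_not_dvd hprime).2 hln).symm
      have hd : (B ℓ).natAbs ∣ ℓ * d0.natAbs := by
        have := Int.natAbs_dvd_natAbs.2 hbdvd
        rwa [Int.natAbs_mul, Int.natAbs_natCast] at this
      have := Nat.Coprime.dvd_of_dvd_mul_left hcp hd
      exact Int.natAbs_dvd_natAbs.1 this
    obtain ⟨b', hb'⟩ := hldvd
    have hb'ne : b' ≠ 0 := by
      rintro rfl; rw [mul_zero] at hb'; exact hbne hb'
    have hb'dvd : b' ∣ d0 := by
      have : (ℓ : ℤ) * b' ∣ (ℓ : ℤ) * d0 := hb' ▸ hbdvd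
      exact (mul_dvd_mul_iff_left hlne).1 this
    have hpmem : (A ℓ, b') ∈ T1 := by
      rw [hT1_def, Finset.mem_product]
      exact ⟨mem_intDivs hadvd hcn, mem_intDivs hb'dvd hd0⟩
    refine Set.mem_biUnion hpmem ?_
    have hlq : (ℓ : ℚ) ≠ 0 := by exact_mod_cast hprime.ne_zero
    have haq : (A ℓ : ℚ) ≠ 0 := Int.cast_ne_zero.2 hane
    have hx : -(b' : ℚ) * (ℓ : ℚ) / (A ℓ : ℚ) = -(B ℓ : ℚ) / (A ℓ : ℚ) := by
      rw [hb']; push_cast; ring_nf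
    show (G2 P Q n (A ℓ, b')).eval (ℓ : ℚ) = 0
    rw [G2_eval hPdeg hQdeg haq hlq, hx, heq, mul_zero]
  have hRootFin : ∀ p ∈ T1, {ℓ : ℕ | (G2 P Q n p).eval (ℓ : ℚ) = 0}.Finite ∧
      {ℓ : ℕ | (G2 P Q n p).eval (ℓ : ℚ) = 0}.ncard ≤ 4 := by
    intro p hp
    rw [hT1_def, Finset.mem_product] at hp
    have h1 : p.1 ≠ 0 := ne_zero_of_mem_intDivs hp.1
    have h2 : p.2 ≠ 0 := ne_zero_of_mem_intDivs hp.2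
    have hGne : G2 P Q n p ≠ 0 := by
      have := G2_ne_zero hn2 hPdeg hPne hQ0 hQdeg hPQ h1 h2
      simpa using this
    obtain ⟨hfin, hcard⟩ := nat_roots_finite hGne
    exact ⟨hfin, hcard.trans ((G2_natDegree_le P Q n p).trans (by omega))⟩
  have hBad2fin : Bad2.Finite := by
    refine Set.Finite.subset (Set.Finite.biUnion T1.finite_toSet
      fun p hp => (hRootFin p hp).1) hBad2sub
  have hBad2card : Bad2.ncard ≤ 4 * T1.card := by
    calc Bad2.ncard ≤ (⋃ p ∈ T1, {ℓ : ℕ | (G2 P Q n p).eval (ℓ : ℚ) = 0}).ncard :=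
          Set.ncard_le_ncard hBad2sub
            (Set.Finite.biUnion T1.finite_toSet fun p hp => (hRootFin p hp).1)
      _ ≤ ∑ p ∈ T1, {ℓ : ℕ | (G2 P Q n p).eval (ℓ : ℚ) = 0}.ncard := ncard_biUnion_le _ _
      _ ≤ ∑ _p ∈ T1, 4 := Finset.sum_le_sum fun p hp => (hRootFin p hp).2
      _ = 4 * T1.card := by rw [Finset.sum_const, smul_eq_mul, mul_comm]
  have hfin : Bad.Finite := by rw [hsplit]; exact hBad1fin.union hBad2fin
  refine ⟨hfin, ?_⟩
  calc Bad.ncard ≤ Bad1.ncard + Bad2.ncard := by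
        rw [hsplit]; exact Set.ncard_union_le _ _
    _ ≤ T1.card + 4 * T1.card := Nat.add_le_add hBad1card hBad2card
    _ = 5 * T1.card := by ring
    _ ≤ 5 * ((2 * tauD cn) * (2 * tauD d0)) := Nat.mul_le_mul_left _ hT1card
    _ = 20 * tauD cn * tauD d0 := by ring

end Aux



/-- **Theorem 1.7 (i).** For `n ∈ {2,3}`: absolute constants `C > 0`, `H₀` such that for
coprime `P, Q` with `deg P = n`, `P(0) = 0`, `deg Q = m < n`, heights `≤ H ≥ H₀`, the
number of primes `ℓ` for which `ℓP + Q` (resp. `P + ℓQ`) is reducible is at most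
`C·τ(cₙ)·τ(d₀)·log H / log log H`. -/
theorem stmt_10 :
    ∃ C : ℝ, 0 < C ∧ ∃ H₀ : ℝ, ∀ n m : ℕ, 2 ≤ n → n ≤ 3 → m < n →
      ∀ H : ℝ, H₀ ≤ H → ∀ P Q : Polynomial ℤ,
        NoCommonFactor P Q → P.natDegree = n → P.coeff 0 = 0 →
        Q ≠ 0 → Q.natDegree = m → pH P ≤ H → pH Q ≤ H →
        Q.coeff 0 ≠ 0 ∧
        ({ℓ : ℕ | ℓ.Prime ∧ HasProperFactor ((ℓ : ℤ) • P + Q)}.Finite ∧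
          (({ℓ : ℕ | ℓ.Prime ∧ HasProperFactor ((ℓ : ℤ) • P + Q)}.ncard : ℝ) ≤
            C * tauD P.leadingCoeff * tauD (Q.coeff 0) *
              Real.log H / Real.log (Real.log H))) ∧
        ({ℓ : ℕ | ℓ.Prime ∧ HasProperFactor (P + (ℓ : ℤ) • Q)}.Finite ∧
          (({ℓ : ℕ | ℓ.Prime ∧ HasProperFactor (P + (ℓ : ℤ) • Q)}.ncard : ℝ) ≤
            C * tauD P.leadingCoeff * tauD (Q.coeff 0) *
              Real.log H / Real.log (Real.log H))) := by
  refine ⟨20, by norm_num, Real.exp (Real.exp 1), ?_⟩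
  intro n m hn2 hn3 hmn H hH P Q hPQ hPdeg hP0 hQne hQdeg hpHP hpHQ
  have hd0 : Q.coeff 0 ≠ 0 := by
    intro h
    have hx1 : (X : Polynomial ℤ) ∣ P := X_dvd_iff.2 hP0
    have hx2 : (X : Polynomial ℤ) ∣ Q := X_dvd_iff.2 h
    have := hPQ X hx1 hx2
    rw [natDegree_X] at this
    exact one_ne_zero this
  have hQdeg' : Q.natDegree < n := by rw [hQdeg]; exact hmn
  -- analytic facts about H
  have hlogH : Real.exp 1 ≤ Real.log H := by
    rw [← Real.log_exp (Real.exp 1)]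
    exact Real.log_le_log (Real.exp_pos _) hH
  have hlogpos : (0 : ℝ) < Real.log H := lt_of_lt_of_le (Real.exp_pos 1) hlogH
  have hloglog : (1 : ℝ) ≤ Real.log (Real.log H) := by
    rw [← Real.log_exp 1]
    exact Real.log_le_log (Real.exp_pos 1) hlogH
  have hllpos : (0 : ℝ) < Real.log (Real.log H) := lt_of_lt_of_le one_pos hloglog
  have hratio : (1 : ℝ) ≤ Real.log H / Real.log (Real.log H) := by
    rw [one_le_div hllpos]
    have := Real.log_le_sub_one_of_pos hlogpos
    linarith
  have hbound : ∀ k : ℕ, k ≤ 20 * tauD P.leadingCoeff * tauD (Q.coeff 0) →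
      (k : ℝ) ≤ 20 * tauD P.leadingCoeff * tauD (Q.coeff 0) *
        Real.log H / Real.log (Real.log H) := by
    intro k hk
    calc (k : ℝ) ≤ ((20 * tauD P.leadingCoeff * tauD (Q.coeff 0) : ℕ) : ℝ) :=
          Nat.cast_le.2 hk
      _ = 20 * (tauD P.leadingCoeff : ℝ) * (tauD (Q.coeff 0) : ℝ) := by push_cast; ring
      _ ≤ 20 * (tauD P.leadingCoeff : ℝ) * (tauD (Q.coeff 0) : ℝ) *
          (Real.log H / Real.log (Real.log H)) :=
          le_mul_of_one_le_right (by positivity) hratio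
      _ = 20 * (tauD P.leadingCoeff : ℝ) * (tauD (Q.coeff 0) : ℝ) *
          Real.log H / Real.log (Real.log H) := by ring
  obtain ⟨hf1, hc1⟩ := Aux.count_family1 hn2 hn3 P Q hPQ hPdeg hP0 hQne hQdeg' hd0
  obtain ⟨hf2, hc2⟩ := Aux.count_family2 hn2 hn3 P Q hPQ hPdeg hP0 hQne hQdeg' hd0
  exact ⟨hd0, ⟨hf1, hbound _ hc1⟩, ⟨hf2, hbound _ hc2⟩⟩
end

section
/- Let n ≥ 1 be an integer and w ≥ n a real number. Then max{ w/(w − n + 1), (3/2)·w − n + 1/2 } ≥ (n + √(n² + 16n − 8))/4. -/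
open Polynomial Filter

/-- The elementary optimization step in the deduction of Theorem 1.1: for `n ≥ 1` and
`w ≥ n`, `max{w/(w − n + 1), (3/2)w − n + 1/2} ≥ (n + √(n² + 16n − 8))/4`. -/
theorem stmt_18 (n : ℕ) (hn : 1 ≤ n) (w : ℝ) (hw : (n : ℝ) ≤ w) :
    max (w / (w - n + 1)) (3 / 2 * w - n + 1 / 2) ≥
      ((n : ℝ) + Real.sqrt ((n : ℝ) ^ 2 + 16 * n - 8)) / 4 := by
  have hn1 : (1:ℝ) ≤ n := by exact_mod_cast hn
  set s := Real.sqrt ((n : ℝ) ^ 2 + 16 * n - 8) with hs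
  have hD : (0:ℝ) ≤ (n:ℝ)^2 + 16*n - 8 := by nlinarith
  have hs2 : s^2 = (n:ℝ)^2 + 16*n - 8 := Real.sq_sqrt hD
  have hs0 : 0 ≤ s := Real.sqrt_nonneg _
  have hs3 : 3 ≤ s := by nlinarith
  set c := ((n:ℝ) + s)/4 with hc
  have hc1 : 1 ≤ c := by rw [hc]; linarith
  have hquad : 2*c^2 - c*n - 2*n + 1 = 0 := by
    rw [hc]; nlinarith [hs2]
  have hden : 0 < w - n + 1 := by linarith
  rw [ge_iff_le]
  rcases le_or_gt c (3/2*w - n + 1/2) with h | h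
  · exact le_max_of_le_right h
  · apply le_max_of_le_left
    rw [le_div_iff₀ hden]
    nlinarith [mul_nonneg (sub_nonneg.2 hc1) (le_of_lt (sub_pos.2 h)), hquad]
end
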